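/- Let G be a finite simple graph with at least one vertex. Then d_0(K_1 ∘ G, 1) = 1 + d_0(G, 1), where K_1 ∘ G is the graph obtained from G by adding one new vertex adjacent to every vertex of G. -/

import Mathlib

open Finset

/-- `S` is a dominating set of `G`: every vertex not in `S` is adjacent to a vertex of `S`. -/
def IsDominatingSet {V : Type*} (G : SimpleGraph V) (S : Finset V) : Prop :=
  ∀ v : V, v ∉ S → ∃ u ∈ S, G.Adj u v

/-- `S` is an isolate dominating set of `G`: a dominating set whose induced
subgraph has an isolated vertex. -/
def IsIsolateDominatingSet {V : Type*} (G : SimpleGraph V) (S : Finset V) : Prop :=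
  IsDominatingSet G S ∧ ∃ v ∈ S, ∀ u ∈ S, ¬ G.Adj v u

/-- `d(G, i)`: the number of dominating sets of `G` of cardinality `i`. -/
noncomputable def domCount {V : Type*} [Fintype V] (G : SimpleGraph V) (i : ℕ) : ℕ :=
  Set.ncard {S : Finset V | IsDominatingSet G S ∧ S.card = i}

/-- `d₀(G, i)`: the number of isolate dominating sets of `G` of cardinality `i`. -/
noncomputable def isoDomCount {V : Type*} [Fintype V] (G : SimpleGraph V) (i : ℕ) : ℕ :=
  Set.ncard {S : Finset V | IsIsolateDominatingSet G S ∧ S.card = i}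

/-- `γ₀(G)`: the isolate domination number, the minimum cardinality of an
isolate dominating set of `G`. -/
noncomputable def isoDomNumber {V : Type*} [Fintype V] (G : SimpleGraph V) : ℕ :=
  sInf {k : ℕ | ∃ S : Finset V, IsIsolateDominatingSet G S ∧ S.card = k}

/-- The corona `K₁ ∘ G`: a copy of `G` together with one new vertex joined to
every vertex of `G`. -/
def coneK1 {V : Type*} (G : SimpleGraph V) : SimpleGraph (Option V) where
  Adj v w :=
    match v, w with
    | some a, some b => G.Adj a b
    | some _, none => True
    | none, some _ => True
    | none, none => False
  symm := by
    constructor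
    rintro (a | a) (b | b) h <;> simp_all
    exact G.adj_symm h
  loopless := by
    constructor
    rintro (a | a) h <;> simp_all

theorem isoDomCount_coneK1_one {V : Type*} [Fintype V] [Nonempty V]
    (G : SimpleGraph V) : isoDomCount (coneK1 G) 1 = 1 + isoDomCount G 1 := by
  classical
  have hset : {S : Finset (Option V) | IsIsolateDominatingSet (coneK1 G) S ∧ S.card = 1}
      = insert {(none : Option V)}
        ((fun S : Finset V => S.image some) ''
          {S : Finset V | IsIsolateDominatingSet G S ∧ S.card = 1}) := by
    ext S
    simp only [Set.mem_insert_iff, Set.mem_image, Set.mem_setOf_eq]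
    constructor
    · rintro ⟨⟨hdom, -⟩, hcard⟩
      obtain ⟨x, hx⟩ := Finset.card_eq_one.mp hcard
      subst hx
      match x with
      | none => exact Or.inl rfl
      | some a =>
        refine Or.inr ⟨{a}, ⟨⟨?_, a, by simp [G.irrefl]⟩, rfl⟩, by simp⟩
        intro v hv
        obtain ⟨u, hu, hadj⟩ := hdom (some v) (by simpa using fun h => hv (by simpa using h))
        simp only [Finset.mem_singleton] at hu
        subst hu
        exact ⟨a, Finset.mem_singleton_self a, hadj⟩
    · rintro (rfl | ⟨T, ⟨⟨hdom, -⟩, hcard⟩, rfl⟩)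
      · refine ⟨⟨?_, none, by simp [coneK1]⟩, by simp⟩
        rintro (_ | v) hv
        · simp at hv
        · exact ⟨none, by simp, by simp [coneK1]⟩
      · obtain ⟨a, rfl⟩ := Finset.card_eq_one.mp hcard
        refine ⟨⟨?_, some a, ?_, ?_⟩, by simp⟩
        · rintro (_ | v) hv
          · exact ⟨some a, by simp, by simp [coneK1]⟩
          · simp only [Finset.image_singleton, Finset.mem_singleton] at hv
            obtain ⟨u, hu, hadj⟩ := hdom v (fun h => hv (by simp_all))
            simp only [Finset.mem_singleton] at hu
            subst hu
            exact ⟨some u, by simp, hadj⟩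
        · simp
        · intro u hu
          simp only [Finset.image_singleton, Finset.mem_singleton] at hu
          subst hu
          simp [coneK1]
  unfold isoDomCount
  rw [hset, Set.ncard_insert_of_notMem, Set.ncard_image_of_injective, add_comm]
  · exact Finset.image_injective (Option.some_injective V)
  · rintro ⟨T, -, hT⟩
    have h1 : (none : Option V) ∈ ({none} : Finset (Option V)) := by simp
    rw [← hT] at h1
    simp at h1
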